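/- Suppose γ > 1, Σ_XΣ_Xᵀ is positive definite, and Λ₁ᵀΛ₁ is positive definite (so that Z₀ = ((1−γ)/γ²)Λ₁ᵀΛ₁ is negative definite). Then for every T > 0 the Hermitian matrix Riccati differential equation Γ₂'(τ) = Γ₂(τ)Z₂Γ₂(τ) + Z₁ᵀΓ₂(τ) + Γ₂(τ)Z₁ + Z₀ with initial condition Γ₂(0) = 0 has a unique solution Γ₂ : [0,T] → ℝ^{2×2} (no finite-time blow-up), and Γ₂(τ) is symmetric and negative definite for every τ ∈ (0,T]. (This is the global-existence part of Proposition 4 of the paper.) -/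

import Mathlib

open Matrix

noncomputable section

namespace Stmt3

/-- `Z₂ = Σ_XΣ_Xᵀ`. -/
def Z₂ (SX : Matrix (Fin 2) (Fin 4) ℝ) : Matrix (Fin 2) (Fin 2) ℝ := SX * SXᵀ

/-- `Z₁ = ((1−γ)/γ)Σ_XΛ₁ − K_X`. -/
def Z₁ (γ : ℝ) (KX : Matrix (Fin 2) (Fin 2) ℝ) (SX : Matrix (Fin 2) (Fin 4) ℝ)
    (Λ₁ : Matrix (Fin 4) (Fin 2) ℝ) : Matrix (Fin 2) (Fin 2) ℝ :=
  ((1 - γ) / γ) • (SX * Λ₁) - KX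

/-- `Z₀ = ((1−γ)/γ²)Λ₁ᵀΛ₁`. -/
def Z₀ (γ : ℝ) (Λ₁ : Matrix (Fin 4) (Fin 2) ℝ) : Matrix (Fin 2) (Fin 2) ℝ :=
  ((1 - γ) / γ ^ 2) • (Λ₁ᵀ * Λ₁)

section RiccatiAux

open NormedSpace Set

attribute [local instance] Matrix.linftyOpNormedAddCommGroup Matrix.linftyOpNormedRing
  Matrix.linftyOpNormedAlgebra

abbrev E2 := Fin 2 → Fin 2 → ℝ

variable (A B C : Matrix (Fin 2) (Fin 2) ℝ)

/-- The Hamiltonian matrix of the Riccati equation. -/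
def Mham : Matrix (Fin 2 ⊕ Fin 2) (Fin 2 ⊕ Fin 2) ℝ := fromBlocks (-B) (-A) C Bᵀ

/-- Fundamental solution of the linearized system. -/
def Phi (t : ℝ) : Matrix (Fin 2 ⊕ Fin 2) (Fin 2 ⊕ Fin 2) ℝ := exp (t • Mham A B C)

def Xm (t : ℝ) : Matrix (Fin 2) (Fin 2) ℝ := (Phi A B C t).toBlocks₁₁
def Ym (t : ℝ) : Matrix (Fin 2) (Fin 2) ℝ := (Phi A B C t).toBlocks₂₁

/-- The candidate Riccati solution `Γ = Y X⁻¹`. -/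
def Gm (t : ℝ) : Matrix (Fin 2) (Fin 2) ℝ := Ym A B C t * (Xm A B C t)⁻¹

lemma hasDerivAt_lin {E F : Type*} [NormedAddCommGroup E] [NormedSpace ℝ E]
    [NormedAddCommGroup F] [NormedSpace ℝ F] [FiniteDimensional ℝ E]
    (L : E →ₗ[ℝ] F) {f : ℝ → E} {f' : E} {t : ℝ} (hf : HasDerivAt f f' t) :
    HasDerivAt (fun s => L (f s)) (L f') t :=
  (L.toContinuousLinearMap.hasFDerivAt.comp_hasDerivAt t hf :)

def L11 : Matrix (Fin 2 ⊕ Fin 2) (Fin 2 ⊕ Fin 2) ℝ →ₗ[ℝ] Matrix (Fin 2) (Fin 2) ℝ where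
  toFun := Matrix.toBlocks₁₁
  map_add' _ _ := rfl
  map_smul' _ _ := rfl

def L21 : Matrix (Fin 2 ⊕ Fin 2) (Fin 2 ⊕ Fin 2) ℝ →ₗ[ℝ] Matrix (Fin 2) (Fin 2) ℝ where
  toFun := Matrix.toBlocks₂₁
  map_add' _ _ := rfl
  map_smul' _ _ := rfl

def Ltr : Matrix (Fin 2) (Fin 2) ℝ →ₗ[ℝ] Matrix (Fin 2) (Fin 2) ℝ where
  toFun := Matrix.transpose
  map_add' P Q := Matrix.transpose_add P Q
  map_smul' c P := Matrix.transpose_smul c P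

def Lmv (v : Fin 2 → ℝ) : Matrix (Fin 2) (Fin 2) ℝ →ₗ[ℝ] (Fin 2 → ℝ) where
  toFun P := P *ᵥ v
  map_add' P Q := Matrix.add_mulVec P Q v
  map_smul' c P := Matrix.smul_mulVec c P v

def Lentry (i j : Fin 2) : Matrix (Fin 2) (Fin 2) ℝ →ₗ[ℝ] ℝ where
  toFun P := P i j
  map_add' _ _ := rfl
  map_smul' _ _ := rfl

lemma hasDerivAt_Phi (t : ℝ) :
    HasDerivAt (Phi A B C) (Mham A B C * Phi A B C t) t :=
  hasDerivAt_exp_smul_const' (𝕂 := ℝ) (Mham A B C) t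

lemma Phi_zero : Phi A B C 0 = 1 := by simp [Phi, exp_zero]

lemma Xm_zero : Xm A B C 0 = 1 := by
  rw [Xm, Phi_zero, ← fromBlocks_one (m := Fin 2)]; rfl

lemma Ym_zero : Ym A B C 0 = 0 := by
  rw [Ym, Phi_zero, ← fromBlocks_one (m := Fin 2)]; rfl

lemma Gm_zero : Gm A B C 0 = 0 := by simp [Gm, Ym_zero]

lemma mul_toBlocks11 (P : Matrix (Fin 2 ⊕ Fin 2) (Fin 2 ⊕ Fin 2) ℝ) :
    (Mham A B C * P).toBlocks₁₁ = -(B * P.toBlocks₁₁) - A * P.toBlocks₂₁ := by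
  conv_lhs => rw [← fromBlocks_toBlocks P]
  rw [Mham, fromBlocks_multiply]
  simp [toBlocks_fromBlocks₁₁, Matrix.neg_mul, sub_eq_add_neg]

lemma mul_toBlocks21 (P : Matrix (Fin 2 ⊕ Fin 2) (Fin 2 ⊕ Fin 2) ℝ) :
    (Mham A B C * P).toBlocks₂₁ = C * P.toBlocks₁₁ + Bᵀ * P.toBlocks₂₁ := by
  conv_lhs => rw [← fromBlocks_toBlocks P]
  rw [Mham, fromBlocks_multiply]
  simp [toBlocks_fromBlocks₂₁]

lemma hasDerivAt_Xm (t : ℝ) :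
    HasDerivAt (Xm A B C) (-(B * Xm A B C t) - A * Ym A B C t) t := by
  have := hasDerivAt_lin (L11) (hasDerivAt_Phi A B C t)
  rw [show L11 (Mham A B C * Phi A B C t)
      = -(B * Xm A B C t) - A * Ym A B C t from mul_toBlocks11 A B C _] at this
  exact this

lemma hasDerivAt_Ym (t : ℝ) :
    HasDerivAt (Ym A B C) (C * Xm A B C t + Bᵀ * Ym A B C t) t := by
  have := hasDerivAt_lin (L21) (hasDerivAt_Phi A B C t)
  rw [show L21 (Mham A B C * Phi A B C t)
      = C * Xm A B C t + Bᵀ * Ym A B C t from mul_toBlocks21 A B C _] at this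
  exact this

def xv (v : Fin 2 → ℝ) (t : ℝ) : Fin 2 → ℝ := Xm A B C t *ᵥ v
def yv (v : Fin 2 → ℝ) (t : ℝ) : Fin 2 → ℝ := Ym A B C t *ᵥ v
def gf (v : Fin 2 → ℝ) (t : ℝ) : ℝ := yv A B C v t ⬝ᵥ xv A B C v t

lemma hasDerivAt_xv (v : Fin 2 → ℝ) (t : ℝ) :
    HasDerivAt (xv A B C v) (-(B *ᵥ xv A B C v t) - A *ᵥ yv A B C v t) t := by
  have := hasDerivAt_lin (Lmv v) (hasDerivAt_Xm A B C t)
  rw [show (-(B *ᵥ xv A B C v t) - A *ᵥ yv A B C v t) = Lmv v (-(B * Xm A B C t) - A * Ym A B C t) by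
    simp only [Lmv, LinearMap.coe_mk, AddHom.coe_mk, xv, yv, Matrix.sub_mulVec, Matrix.neg_mulVec,
      Matrix.mulVec_mulVec]]
  exact this

lemma hasDerivAt_yv (v : Fin 2 → ℝ) (t : ℝ) :
    HasDerivAt (yv A B C v) (C *ᵥ xv A B C v t + Bᵀ *ᵥ yv A B C v t) t := by
  have := hasDerivAt_lin (Lmv v) (hasDerivAt_Ym A B C t)
  rw [show (C *ᵥ xv A B C v t + Bᵀ *ᵥ yv A B C v t) = Lmv v (C * Xm A B C t + Bᵀ * Ym A B C t) by
    simp only [Lmv, LinearMap.coe_mk, AddHom.coe_mk, xv, yv, Matrix.add_mulVec,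
      Matrix.mulVec_mulVec]]
  exact this

lemma hasDerivAt_gf (v : Fin 2 → ℝ) (t : ℝ) :
    HasDerivAt (gf A B C v)
      (xv A B C v t ⬝ᵥ (C *ᵥ xv A B C v t) - yv A B C v t ⬝ᵥ (A *ᵥ yv A B C v t)) t := by
  have hx := hasDerivAt_xv A B C v t
  have hy := hasDerivAt_yv A B C v t
  have h : HasDerivAt (gf A B C v)
      ((C *ᵥ xv A B C v t + Bᵀ *ᵥ yv A B C v t) ⬝ᵥ xv A B C v t
        + yv A B C v t ⬝ᵥ (-(B *ᵥ xv A B C v t) - A *ᵥ yv A B C v t)) t := by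
    have hcomp : ∀ i, HasDerivAt (fun s => yv A B C v s i * xv A B C v s i)
        ((C *ᵥ xv A B C v t + Bᵀ *ᵥ yv A B C v t) i * xv A B C v t i
          + yv A B C v t i * (-(B *ᵥ xv A B C v t) - A *ᵥ yv A B C v t) i) t := fun i =>
      ((hasDerivAt_pi.1 hy i).mul (hasDerivAt_pi.1 hx i))
    have hsum := HasDerivAt.fun_sum (fun i (_ : i ∈ Finset.univ) => hcomp i)
    have egf : gf A B C v = fun y => ∑ i : Fin 2, yv A B C v y i * xv A B C v y i := rfl
    rw [egf]
    simpa [dotProduct, Finset.sum_add_distrib] using hsum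
  have e : (C *ᵥ xv A B C v t + Bᵀ *ᵥ yv A B C v t) ⬝ᵥ xv A B C v t
        + yv A B C v t ⬝ᵥ (-(B *ᵥ xv A B C v t) - A *ᵥ yv A B C v t)
      = xv A B C v t ⬝ᵥ (C *ᵥ xv A B C v t) - yv A B C v t ⬝ᵥ (A *ᵥ yv A B C v t) := by
    rw [add_dotProduct, dotProduct_sub, dotProduct_neg,
      Matrix.mulVec_transpose, ← Matrix.dotProduct_mulVec,
      dotProduct_comm (C *ᵥ xv A B C v t)]
    ring
  rwa [e] at h

variable {A C} in
lemma antitone_gf (hA : A.PosDef) (hC : ∀ x : Fin 2 → ℝ, x ≠ 0 → x ⬝ᵥ (C *ᵥ x) < 0)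
    (v : Fin 2 → ℝ) : Antitone (gf A B C v) := by
  apply antitone_of_deriv_nonpos
  · exact fun t => (hasDerivAt_gf A B C v t).differentiableAt
  · intro t
    rw [(hasDerivAt_gf A B C v t).deriv]
    have h1 : xv A B C v t ⬝ᵥ (C *ᵥ xv A B C v t) ≤ 0 := by
      rcases eq_or_ne (xv A B C v t) 0 with h | h
      · simp [h]
      · exact (hC _ h).le
    have h2 : 0 ≤ yv A B C v t ⬝ᵥ (A *ᵥ yv A B C v t) := by
      simpa using hA.posSemidef.dotProduct_mulVec_nonneg (yv A B C v t)
    linarith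

lemma gf_zero_t0 (v : Fin 2 → ℝ) : gf A B C v 0 = 0 := by
  simp [gf, yv, Ym_zero, Matrix.zero_mulVec]

variable {A C} in
lemma eq_zero_of_gf_eq_zero (hA : A.PosDef)
    (hC : ∀ x : Fin 2 → ℝ, x ≠ 0 → x ⬝ᵥ (C *ᵥ x) < 0)
    {v : Fin 2 → ℝ} {t₀ : ℝ} (ht₀ : 0 < t₀) (hg : gf A B C v t₀ = 0) : v = 0 := by
  by_contra hv
  have hmono := antitone_gf B hA hC v
  have hzero : ∀ s ∈ Set.Icc (0:ℝ) t₀, gf A B C v s = 0 := fun s hs =>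
    le_antisymm (by simpa [gf_zero_t0] using hmono hs.1) (hg ▸ hmono hs.2)
  have hd : HasDerivWithinAt (gf A B C v)
      (xv A B C v 0 ⬝ᵥ (C *ᵥ xv A B C v 0) - yv A B C v 0 ⬝ᵥ (A *ᵥ yv A B C v 0))
      (Set.Ioi 0) 0 := (hasDerivAt_gf A B C v 0).hasDerivWithinAt
  rw [hasDerivWithinAt_iff_tendsto_slope] at hd
  have hIoo : Set.Ioo (0:ℝ) t₀ ∈ nhdsWithin (0:ℝ) (Set.Ioi 0 \ {0}) := by
    rw [Set.diff_singleton_eq_self (by simp)]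
    exact Ioo_mem_nhdsGT_of_mem ⟨le_refl _, ht₀⟩
  have hslope : Filter.Tendsto (slope (gf A B C v) 0)
      (nhdsWithin (0:ℝ) (Set.Ioi 0 \ {0})) (nhds 0) := by
    apply Filter.Tendsto.congr' _ tendsto_const_nhds
    filter_upwards [hIoo] with s hs
    rw [slope_def_field, hzero s ⟨hs.1.le, hs.2.le⟩, gf_zero_t0]
    simp
  have hne : (nhdsWithin (0:ℝ) (Set.Ioi 0 \ {0})).NeBot := by
    rw [Set.diff_singleton_eq_self (by simp)]; infer_instance
  have heq := tendsto_nhds_unique hd hslope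
  have hx0 : xv A B C v 0 = v := by simp [xv, Xm_zero, Matrix.one_mulVec]
  have hy0 : yv A B C v 0 = 0 := by simp [yv, Ym_zero, Matrix.zero_mulVec]
  rw [hx0, hy0, Matrix.mulVec_zero, dotProduct_zero, sub_zero] at heq
  exact absurd heq (ne_of_lt (hC v hv))

variable {A C} in
lemma isUnit_Xm_det (hA : A.PosDef)
    (hC : ∀ x : Fin 2 → ℝ, x ≠ 0 → x ⬝ᵥ (C *ᵥ x) < 0)
    {t : ℝ} (ht : 0 ≤ t) : IsUnit (Xm A B C t).det := by
  rw [isUnit_iff_ne_zero]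
  intro hdet
  obtain ⟨v, hv, hXv⟩ := (Matrix.exists_mulVec_eq_zero_iff).2 hdet
  rcases eq_or_lt_of_le ht with h0 | hpos
  · rw [← h0, Xm_zero, Matrix.one_mulVec] at hXv
    exact hv hXv
  · have hgz : gf A B C v t = 0 := by
      rw [gf, show xv A B C v t = 0 from hXv, dotProduct_zero]
    exact hv (eq_zero_of_gf_eq_zero B hA hC hpos hgz)

variable {A C} in
lemma XtY_symm (hAs : Aᵀ = A) (hCs : Cᵀ = C) (t : ℝ) :
    (Xm A B C t)ᵀ * Ym A B C t = (Ym A B C t)ᵀ * Xm A B C t := by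
  set H : ℝ → Matrix (Fin 2) (Fin 2) ℝ :=
    fun s => (Xm A B C s)ᵀ * Ym A B C s - (Ym A B C s)ᵀ * Xm A B C s with hH
  have hderiv : ∀ s, HasDerivAt H 0 s := by
    intro s
    have hX := hasDerivAt_Xm A B C s
    have hY := hasDerivAt_Ym A B C s
    have h1 := ((hasDerivAt_lin Ltr hX).mul hY).sub ((hasDerivAt_lin Ltr hY).mul hX)
    have e : Ltr (-(B * Xm A B C s) - A * Ym A B C s) * Ym A B C s
          + Ltr (Xm A B C s) * (C * Xm A B C s + Bᵀ * Ym A B C s)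
          - (Ltr (C * Xm A B C s + Bᵀ * Ym A B C s) * Xm A B C s
            + Ltr (Ym A B C s) * (-(B * Xm A B C s) - A * Ym A B C s)) = 0 := by
      show ((-(B * Xm A B C s) - A * Ym A B C s)ᵀ * Ym A B C s
          + (Xm A B C s)ᵀ * (C * Xm A B C s + Bᵀ * Ym A B C s))
          - ((C * Xm A B C s + Bᵀ * Ym A B C s)ᵀ * Xm A B C s
            + (Ym A B C s)ᵀ * (-(B * Xm A B C s) - A * Ym A B C s)) = 0
      simp only [Matrix.transpose_sub, Matrix.transpose_neg, Matrix.transpose_mul,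
        Matrix.transpose_add, Matrix.transpose_transpose, hAs, hCs]
      noncomm_ring
    rw [e] at h1
    exact h1
  have hconst : H t = H 0 :=
    is_const_of_deriv_eq_zero (fun s => (hderiv s).differentiableAt)
      (fun s => (hderiv s).deriv) t 0
  have h0 : H 0 = 0 := by simp [hH, Xm_zero, Ym_zero]
  have := hconst.trans h0
  rw [hH] at this
  exact sub_eq_zero.mp this

variable {A C} in
lemma Gm_isSymm (hA : A.PosDef)
    (hC : ∀ x : Fin 2 → ℝ, x ≠ 0 → x ⬝ᵥ (C *ᵥ x) < 0)
    (hAs : Aᵀ = A) (hCs : Cᵀ = C) {t : ℝ} (ht : 0 ≤ t) : (Gm A B C t).IsSymm := by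
  have hdet := isUnit_Xm_det B hA hC ht
  have h := XtY_symm B hAs hCs t
  rw [Matrix.IsSymm, Gm, Matrix.transpose_mul, Matrix.transpose_nonsing_inv]
  calc ((Xm A B C t)ᵀ)⁻¹ * (Ym A B C t)ᵀ
      = ((Xm A B C t)ᵀ)⁻¹ * (((Ym A B C t)ᵀ * Xm A B C t) * (Xm A B C t)⁻¹) := by
        rw [Matrix.mul_assoc, Matrix.mul_nonsing_inv _ hdet, Matrix.mul_one]
    _ = ((Xm A B C t)ᵀ)⁻¹ * ((Xm A B C t)ᵀ * (Ym A B C t * (Xm A B C t)⁻¹)) := by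
        rw [← h, Matrix.mul_assoc]
    _ = Ym A B C t * (Xm A B C t)⁻¹ := by
        rw [← Matrix.mul_assoc, Matrix.nonsing_inv_mul _ (by rwa [Matrix.det_transpose]),
          Matrix.one_mul]

variable {A B C} in
lemma hasDerivAt_inv_Xm {t : ℝ} (hdet : IsUnit (Xm A B C t).det) :
    HasDerivAt (fun s => (Xm A B C s)⁻¹)
      (-((Xm A B C t)⁻¹ * (-(B * Xm A B C t) - A * Ym A B C t) * (Xm A B C t)⁻¹)) t := by
  have hu : IsUnit (Xm A B C t) := (Matrix.isUnit_iff_isUnit_det _).mpr hdet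
  obtain ⟨u, hu'⟩ := hu
  have hf := (hasFDerivAt_ringInverse (𝕜 := ℝ) u)
  rw [hu'] at hf
  have h := hf.comp_hasDerivAt t (hasDerivAt_Xm A B C t)
  have hcoe : (↑u⁻¹ : Matrix (Fin 2) (Fin 2) ℝ) = (Xm A B C t)⁻¹ := by
    rw [Matrix.coe_units_inv, hu']
  simp only [ContinuousLinearMap.neg_apply, ContinuousLinearMap.mulLeftRight_apply, hcoe] at h
  have hfun : (Ring.inverse ∘ Xm A B C) = fun s => (Xm A B C s)⁻¹ := by
    funext s
    simp only [Function.comp_apply, ← Matrix.nonsing_inv_eq_ringInverse]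
  rw [hfun] at h
  exact h

/-- The Riccati right-hand side. -/
def RicRHS (P : Matrix (Fin 2) (Fin 2) ℝ) : Matrix (Fin 2) (Fin 2) ℝ :=
  P * A * P + Bᵀ * P + P * B + C

variable {A B C} in
lemma hasDerivAt_Gm {t : ℝ} (hdet : IsUnit (Xm A B C t).det) :
    HasDerivAt (Gm A B C) (RicRHS A B C (Gm A B C t)) t := by
  have h := (hasDerivAt_Ym A B C t).mul (hasDerivAt_inv_Xm hdet)
  have hXX : Xm A B C t * (Xm A B C t)⁻¹ = 1 := Matrix.mul_nonsing_inv _ hdet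
  have e1 : RicRHS A B C (Gm A B C t)
      = (C * Xm A B C t + Bᵀ * Ym A B C t) * (Xm A B C t)⁻¹
        + Ym A B C t * (-((Xm A B C t)⁻¹ * (-(B * Xm A B C t) - A * Ym A B C t)
            * (Xm A B C t)⁻¹)) := by
    simp only [RicRHS, Gm, Matrix.mul_sub, Matrix.sub_mul, Matrix.mul_add, Matrix.add_mul,
      Matrix.mul_neg, Matrix.neg_mul, Matrix.mul_assoc]
    rw [hXX]
    simp only [Matrix.mul_one]
    noncomm_ring
  rw [e1]
  exact h

variable {A C} in
lemma Gm_negdef (hA : A.PosDef)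
    (hC : ∀ x : Fin 2 → ℝ, x ≠ 0 → x ⬝ᵥ (C *ᵥ x) < 0)
    {t : ℝ} (ht : 0 < t) {w : Fin 2 → ℝ} (hw : w ≠ 0) :
    w ⬝ᵥ (Gm A B C t *ᵥ w) < 0 := by
  have hdet := isUnit_Xm_det B hA hC ht.le
  set v : Fin 2 → ℝ := (Xm A B C t)⁻¹ *ᵥ w with hv'
  have hXv : xv A B C v t = w := by
    rw [xv, Matrix.mulVec_mulVec, Matrix.mul_nonsing_inv _ hdet, Matrix.one_mulVec]
  have hv : v ≠ 0 := by
    intro h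
    apply hw
    rw [← hXv, xv, h, Matrix.mulVec_zero]
  have hGw : Gm A B C t *ᵥ w = yv A B C v t := by
    rw [Gm, ← Matrix.mulVec_mulVec]; rfl
  rw [hGw, show w ⬝ᵥ yv A B C v t = gf A B C v t by rw [← hXv, gf, dotProduct_comm]]
  have hle : gf A B C v t ≤ 0 := by
    have := antitone_gf B hA hC v ht.le
    rwa [gf_zero_t0] at this
  rcases lt_or_eq_of_le hle with hlt | heq
  · exact hlt
  · exact absurd (eq_zero_of_gf_eq_zero B hA hC ht heq) hv

lemma entry_mul_bound (P Q : Matrix (Fin 2) (Fin 2) ℝ) {p q : ℝ} (hp : 0 ≤ p) (hq : 0 ≤ q)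
    (hP : ∀ i j, |P i j| ≤ p) (hQ : ∀ i j, |Q i j| ≤ q) (i j : Fin 2) :
    |(P * Q) i j| ≤ 2 * (p * q) := by
  rw [Matrix.mul_apply, Fin.sum_univ_two]
  have h0 : |P i 0 * Q 0 j| ≤ p * q := by
    rw [abs_mul]; exact mul_le_mul (hP i 0) (hQ 0 j) (abs_nonneg _) hp
  have h1 : |P i 1 * Q 1 j| ≤ p * q := by
    rw [abs_mul]; exact mul_le_mul (hP i 1) (hQ 1 j) (abs_nonneg _) hp
  calc |P i 0 * Q 0 j + P i 1 * Q 1 j| ≤ |P i 0 * Q 0 j| + |P i 1 * Q 1 j| := abs_add_le _ _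
    _ ≤ 2 * (p * q) := by linarith

lemma entry_le_norm (u : E2) (i j : Fin 2) : |u i j| ≤ ‖u‖ :=
  le_trans (norm_le_pi_norm (u i) j) (norm_le_pi_norm u i)

variable {A B C} in
lemma ric_lipschitz {R a b : ℝ} (hR : 0 ≤ R)
    (ha : ∀ i j, |A i j| ≤ a) (hb : ∀ i j, |B i j| ≤ b)
    (ha0 : 0 ≤ a) (hb0 : 0 ≤ b) :
    LipschitzOnWith (Real.toNNReal (8 * R * a + 4 * b))
      (fun u : E2 => Matrix.of.symm (RicRHS A B C (Matrix.of u))) (Metric.closedBall 0 R) := by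
  apply LipschitzOnWith.of_dist_le_mul
  intro u hu w hw
  rw [dist_eq_norm, dist_eq_norm]
  set U : Matrix (Fin 2) (Fin 2) ℝ := Matrix.of u
  set W : Matrix (Fin 2) (Fin 2) ℝ := Matrix.of w
  set d : Matrix (Fin 2) (Fin 2) ℝ := U - W
  have hUb : ∀ i j, |U i j| ≤ R := fun i j => by
    have h1 := entry_le_norm u i j
    have hn : ‖u‖ ≤ R := by rwa [← dist_zero_right u, ← Metric.mem_closedBall]
    show |u i j| ≤ R
    linarith
  have hWb : ∀ i j, |W i j| ≤ R := fun i j => by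
    have h1 := entry_le_norm w i j
    have hn : ‖w‖ ≤ R := by rwa [← dist_zero_right w, ← Metric.mem_closedBall]
    show |w i j| ≤ R
    linarith
  set δ : ℝ := ‖u - w‖ with hδ
  have hδ0 : 0 ≤ δ := norm_nonneg _
  have hdb : ∀ i j, |d i j| ≤ δ := fun i j => entry_le_norm (u - w) i j
  have key : RicRHS A B C U - RicRHS A B C W
      = U * A * d + d * (A * W) + Bᵀ * d + d * B := by
    simp only [RicRHS, d]
    noncomm_ring
  have hK0 : (0:ℝ) ≤ 8 * R * a + 4 * b := by positivity
  rw [Real.coe_toNNReal _ hK0]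
  have hgoal : ∀ i j, |(RicRHS A B C U - RicRHS A B C W) i j| ≤ (8 * R * a + 4 * b) * δ := by
    intro i j
    rw [key]
    have e1 : |(U * A * d) i j| ≤ 2 * (2 * (R * a) * δ) :=
      entry_mul_bound (U * A) d (by positivity) hδ0
        (entry_mul_bound U A hR ha0 hUb ha) hdb i j
    have e2 : |(d * (A * W)) i j| ≤ 2 * (δ * (2 * (a * R))) :=
      entry_mul_bound d (A * W) hδ0 (by positivity) hdb
        (entry_mul_bound A W ha0 hR ha hWb) i j
    have e3 : |(Bᵀ * d) i j| ≤ 2 * (b * δ) :=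
      entry_mul_bound Bᵀ d hb0 hδ0 (fun i j => hb j i) hdb i j
    have e4 : |(d * B) i j| ≤ 2 * (δ * b) :=
      entry_mul_bound d B hδ0 hb0 hdb hb i j
    have habs : |(U * A * d + d * (A * W) + Bᵀ * d + d * B) i j|
        ≤ |(U * A * d) i j| + |(d * (A * W)) i j| + |(Bᵀ * d) i j| + |(d * B) i j| := by
      simp only [Matrix.add_apply]
      calc |((U * A * d) i j + (d * (A * W)) i j + (Bᵀ * d) i j) + (d * B) i j|
          ≤ |(U * A * d) i j + (d * (A * W)) i j + (Bᵀ * d) i j| + |(d * B) i j| := abs_add_le _ _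
        _ ≤ (|(U * A * d) i j + (d * (A * W)) i j| + |(Bᵀ * d) i j|) + |(d * B) i j| := by
            have := abs_add_le ((U * A * d) i j + (d * (A * W)) i j) ((Bᵀ * d) i j); linarith
        _ ≤ _ := by
            have := abs_add_le ((U * A * d) i j) ((d * (A * W)) i j); linarith
    nlinarith [habs]
  have hnn : (0:ℝ) ≤ (8 * R * a + 4 * b) * δ := by positivity
  rw [pi_norm_le_iff_of_nonneg hnn]
  intro i
  rw [pi_norm_le_iff_of_nonneg hnn]
  intro j
  have hent : ((fun u : E2 => Matrix.of.symm (RicRHS A B C (Matrix.of u))) u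
        - (fun u : E2 => Matrix.of.symm (RicRHS A B C (Matrix.of u))) w) i j
      = (RicRHS A B C U - RicRHS A B C W) i j := rfl
  rw [Real.norm_eq_abs, hent]
  exact hgoal i j

variable {A B C} in
lemma ric_unique {T : ℝ}
    {f g : ℝ → Matrix (Fin 2) (Fin 2) ℝ}
    (hf0 : f 0 = g 0)
    (hf : ∀ τ ∈ Icc (0:ℝ) T, ∀ i j, HasDerivWithinAt (fun s => f s i j)
      ((RicRHS A B C (f τ)) i j) (Icc (0:ℝ) T) τ)
    (hg : ∀ τ ∈ Icc (0:ℝ) T, ∀ i j, HasDerivWithinAt (fun s => g s i j)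
      ((RicRHS A B C (g τ)) i j) (Icc (0:ℝ) T) τ) :
    ∀ t ∈ Icc (0:ℝ) T, f t = g t := by
  set fE : ℝ → E2 := fun t => Matrix.of.symm (f t) with hfE
  set gE : ℝ → E2 := fun t => Matrix.of.symm (g t) with hgE
  have hfc : ContinuousOn fE (Icc (0:ℝ) T) := by
    apply continuousOn_pi.2; intro i; apply continuousOn_pi.2; intro j
    exact fun τ hτ => (hf τ hτ i j).continuousWithinAt
  have hgc : ContinuousOn gE (Icc (0:ℝ) T) := by
    apply continuousOn_pi.2; intro i; apply continuousOn_pi.2; intro j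
    exact fun τ hτ => (hg τ hτ i j).continuousWithinAt
  obtain ⟨Rf, hRf⟩ := isCompact_Icc.exists_bound_of_continuousOn hfc
  obtain ⟨Rg, hRg⟩ := isCompact_Icc.exists_bound_of_continuousOn hgc
  set R : ℝ := max (max Rf Rg) 0 with hR
  have hR0 : 0 ≤ R := le_max_right _ _
  set a : ℝ := ‖(Matrix.of.symm A : E2)‖ with haa
  set b : ℝ := ‖(Matrix.of.symm B : E2)‖ with hbb
  have ha : ∀ i j, |A i j| ≤ a := fun i j => entry_le_norm (Matrix.of.symm A) i j
  have hb : ∀ i j, |B i j| ≤ b := fun i j => entry_le_norm (Matrix.of.symm B) i j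
  have hlip := ric_lipschitz (A := A) (B := B) (C := C) hR0 ha hb (norm_nonneg _) (norm_nonneg _)
  have hmem : ∀ t ∈ Ico (0:ℝ) T, Icc (0:ℝ) T ∈ nhdsWithin t (Ici t) := by
    intro t ht
    rw [mem_nhdsWithin]
    exact ⟨Iio T, isOpen_Iio, ht.2, fun s hs => ⟨le_trans ht.1 hs.2, le_of_lt hs.1⟩⟩
  have hkey := ODE_solution_unique_of_mem_Icc_right
    (v := fun _ : ℝ => fun u : E2 => Matrix.of.symm (RicRHS A B C (Matrix.of u)))
    (s := fun _ : ℝ => Metric.closedBall (0 : E2) R)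
    (K := Real.toNNReal (8 * R * a + 4 * b))
    (f := fE) (g := gE) (a := (0:ℝ)) (b := T)
    (fun _ _ => hlip)
    hfc
    (fun t ht => by
      have h1 : HasDerivWithinAt fE (Matrix.of.symm (RicRHS A B C (f t))) (Icc (0:ℝ) T) t :=
        hasDerivWithinAt_pi.2 fun i => hasDerivWithinAt_pi.2 fun j =>
          hf t (Ico_subset_Icc_self ht) i j
      exact h1.mono_of_mem_nhdsWithin (hmem t ht))
    (fun t ht => by
      rw [Metric.mem_closedBall, dist_zero_right]
      exact le_trans (hRf t (Ico_subset_Icc_self ht))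
        (le_trans (le_max_left _ _) (le_max_left _ _)))
    hgc
    (fun t ht => by
      have h1 : HasDerivWithinAt gE (Matrix.of.symm (RicRHS A B C (g t))) (Icc (0:ℝ) T) t :=
        hasDerivWithinAt_pi.2 fun i => hasDerivWithinAt_pi.2 fun j =>
          hg t (Ico_subset_Icc_self ht) i j
      exact h1.mono_of_mem_nhdsWithin (hmem t ht))
    (fun t ht => by
      rw [Metric.mem_closedBall, dist_zero_right]
      exact le_trans (hRg t (Ico_subset_Icc_self ht))
        (le_trans (le_max_right _ _) (le_max_left _ _)))
    (by show Matrix.of.symm (f 0) = Matrix.of.symm (g 0); rw [hf0])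
  intro t ht
  exact Matrix.of.symm.injective (hkey ht)


/-- global-existence part of Proposition 4: if `γ > 1`, `Σ_XΣ_Xᵀ` is
positive definite and `Λ₁ᵀΛ₁` is positive definite, then for every `T > 0` the
Hermitian matrix Riccati equation `Γ₂' = Γ₂Z₂Γ₂ + Z₁ᵀΓ₂ + Γ₂Z₁ + Z₀`, `Γ₂(0) = 0`,
has a unique solution on `[0,T]`, which is symmetric and negative definite on `(0,T]`. -/
theorem riccati_global_existence
    (γ : ℝ) (hγ : 1 < γ)
    (KX : Matrix (Fin 2) (Fin 2) ℝ) (SX : Matrix (Fin 2) (Fin 4) ℝ)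
    (Λ₁ : Matrix (Fin 4) (Fin 2) ℝ)
    (hZ₂pos : (SX * SXᵀ).PosDef) (hΛpos : (Λ₁ᵀ * Λ₁).PosDef)
    (T : ℝ) (hT : 0 < T) :
    ∃ Γ : ℝ → Matrix (Fin 2) (Fin 2) ℝ,
      (Γ 0 = 0 ∧ ∀ τ ∈ Set.Icc (0 : ℝ) T, ∀ i j, HasDerivWithinAt (fun s => Γ s i j)
        ((Γ τ * Z₂ SX * Γ τ + (Z₁ γ KX SX Λ₁)ᵀ * Γ τ + Γ τ * Z₁ γ KX SX Λ₁
          + Z₀ γ Λ₁) i j) (Set.Icc (0 : ℝ) T) τ) ∧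
      (∀ Γ' : ℝ → Matrix (Fin 2) (Fin 2) ℝ,
        (Γ' 0 = 0 ∧ ∀ τ ∈ Set.Icc (0 : ℝ) T, ∀ i j, HasDerivWithinAt (fun s => Γ' s i j)
          ((Γ' τ * Z₂ SX * Γ' τ + (Z₁ γ KX SX Λ₁)ᵀ * Γ' τ + Γ' τ * Z₁ γ KX SX Λ₁
            + Z₀ γ Λ₁) i j) (Set.Icc (0 : ℝ) T) τ) →
        Set.EqOn Γ Γ' (Set.Icc (0 : ℝ) T)) ∧
      (∀ τ ∈ Set.Ioc (0 : ℝ) T, (Γ τ).IsSymm ∧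
        ∀ x : Fin 2 → ℝ, x ≠ 0 → x ⬝ᵥ (Γ τ *ᵥ x) < 0) := by
  set A : Matrix (Fin 2) (Fin 2) ℝ := Z₂ SX with hAdef
  set B : Matrix (Fin 2) (Fin 2) ℝ := Z₁ γ KX SX Λ₁ with hBdef
  set C : Matrix (Fin 2) (Fin 2) ℝ := Z₀ γ Λ₁ with hCdef
  have hA : A.PosDef := hZ₂pos
  have hAs : Aᵀ = A := by
    rw [hAdef, Z₂, Matrix.transpose_mul, Matrix.transpose_transpose]
  have hCs : Cᵀ = C := by
    rw [hCdef, Z₀, Matrix.transpose_smul, Matrix.transpose_mul, Matrix.transpose_transpose]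
  have hC : ∀ x : Fin 2 → ℝ, x ≠ 0 → x ⬝ᵥ (C *ᵥ x) < 0 := by
    intro x hx
    rw [hCdef, Z₀, Matrix.smul_mulVec, dotProduct_smul, smul_eq_mul]
    apply mul_neg_of_neg_of_pos
    · apply div_neg_of_neg_of_pos
      · linarith
      · exact pow_pos (by linarith : (0:ℝ) < γ) 2
    · have h2 := hΛpos.dotProduct_mulVec_pos hx
      simpa using h2
  have hGder : ∀ τ ∈ Set.Icc (0:ℝ) T, ∀ i j,
      HasDerivWithinAt (fun s => Gm A B C s i j)
        ((RicRHS A B C (Gm A B C τ)) i j) (Set.Icc (0:ℝ) T) τ := by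
    intro τ hτ i j
    have hdet := isUnit_Xm_det B hA hC hτ.1
    exact (hasDerivAt_lin (Lentry i j) (hasDerivAt_Gm hdet)).hasDerivWithinAt
  refine ⟨Gm A B C, ⟨Gm_zero A B C, hGder⟩, ?_, ?_⟩
  · rintro Γ' ⟨h0', hder'⟩
    intro t ht
    exact ric_unique (by rw [Gm_zero, h0']) hGder
      (fun τ hτ i j => hder' τ hτ i j) t ht
  · intro τ hτ
    exact ⟨Gm_isSymm B hA hC hAs hCs hτ.1.le,
      fun x hx => Gm_negdef B hA hC hτ.1 hx⟩


end RiccatiAux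

end Stmt3
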